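/- arXiv:1207.0325 — 5 statements merged into one kernel-verified Lean document; each statement's English description precedes it below -/
import Mathlib

section
/- Let 𝔤 be a finite-dimensional real Lie algebra. Let ℋ and 𝒦 be Lie subalgebras of 𝔤 with ℋ nilpotent and ⁅ℋ, 𝒦⁆ = 0. Suppose 𝒦 is the internal direct sum 𝒦 = 𝒯₁ ⊕ 𝒦*, where 𝒯₁ is a linear subspace contained in the center of 𝒦 and 𝒦* is a Lie subalgebra of 𝒦, and let 𝔞₀ be a Cartan subalgebra of 𝒦*. Suppose further that there exist h₀ ∈ ℋ and linear subspaces 𝒮, 𝒰 of 𝔤, each mapped into itself by ad(h₀) with ad(h₀) injective on each of them, such that 𝔤 is the internal direct sum of subspaces 𝔤 = ℋ ⊕ 𝒦 ⊕ 𝒮 ⊕ 𝒰. Then the subspace ℋ + 𝔞₀ + 𝒯₁ is a Cartan subalgebra of 𝔤. -/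
open LieAlgebra

lemma commute_ad_of_lie_eq_zero {L : Type*} [LieRing L] [LieAlgebra ℝ L]
    {x y : L} (h : ⁅x, y⁆ = 0) : Commute (ad ℝ L x) (ad ℝ L y) := by
  show ad ℝ L x * ad ℝ L y = ad ℝ L y * ad ℝ L x
  ext z
  simp only [Module.End.mul_apply, ad_apply]
  rw [leibniz_lie, h, zero_lie, zero_add]

lemma lie_skew_zero {L : Type*} [LieRing L] {x y : L} (h : ⁅x, y⁆ = 0) : ⁅y, x⁆ = 0 := by
  rw [← neg_eq_zero, lie_skew, h]

lemma exists_ad_pow_vanish {L : Type*} [LieRing L] [LieAlgebra ℝ L] [FiniteDimensional ℝ L]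
    (N : LieSubalgebra ℝ L) (hN : LieRing.IsNilpotent ↥N) {x : L} (hx : x ∈ N) :
    ∃ n, ∀ y ∈ N, ((ad ℝ L x) ^ n) y = 0 := by
  haveI := hN
  have h1 : _root_.IsNilpotent (ad ℝ ↥N ⟨x, hx⟩) :=
    (LieAlgebra.isNilpotent_iff_forall (R := ℝ) (L := ↥N)).mp hN _
  obtain ⟨n, hn⟩ := h1
  have key : ∀ k (z : ↥N), (((ad ℝ ↥N ⟨x, hx⟩) ^ k) z : L) = ((ad ℝ L x) ^ k) (z : L) := by
    intro k
    induction k with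
    | zero => intro z; simp
    | succ k ih =>
      intro z
      rw [pow_succ, pow_succ]
      rw [Module.End.mul_apply, Module.End.mul_apply, ih ((ad ℝ ↥N ⟨x, hx⟩) z)]
      congr 1
  refine ⟨n, fun y hy => ?_⟩
  have := key n ⟨y, hy⟩
  rw [hn] at this
  simpa using this.symm

lemma isNilpotent_restrict_of_pow_vanish {L : Type*} [LieRing L] [LieAlgebra ℝ L]
    (f : Module.End ℝ L) (p : Submodule ℝ L) (hmap : ∀ c ∈ p, f c ∈ p) (n : ℕ)
    (hvan : ∀ c ∈ p, (f ^ n) c = 0) :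
    IsNilpotent (f.restrict hmap) := by
  refine ⟨n, ?_⟩
  rw [Module.End.pow_restrict]
  ext c
  simp only [LinearMap.restrict_coe_apply, LinearMap.zero_apply, ZeroMemClass.coe_zero]
  exact hvan c c.2

lemma commute_restrict_of_commute {L : Type*} [LieRing L] [LieAlgebra ℝ L]
    (f g : Module.End ℝ L) (p : Submodule ℝ L) (hf : ∀ c ∈ p, f c ∈ p)
    (hg : ∀ c ∈ p, g c ∈ p) (h : Commute f g) :
    Commute (f.restrict hf) (g.restrict hg) := by
  apply LinearMap.ext
  intro c
  apply Subtype.ext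
  have := LinearMap.congr_fun h.eq (c : L)
  simpa [Module.End.mul_apply, LinearMap.restrict_coe_apply] using this

/-- Let `𝔤` be a finite-dimensional real Lie algebra, `ℋ, 𝒦` Lie subalgebras
with `ℋ` nilpotent and `⁅ℋ, 𝒦⁆ = 0`. Suppose `𝒦 = 𝒯₁ ⊕ 𝒦*` internally, where `𝒯₁` is a linear
subspace contained in the center of `𝒦` and `𝒦*` is a Lie subalgebra of `𝒦`, and let `𝔞₀` be a
Cartan subalgebra of `𝒦*`. Suppose further that there exist `h₀ ∈ ℋ` and linear subspaces
`𝒮, 𝒰`, each mapped into itself by `ad h₀` with `ad h₀` injective on each of them, such that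
`𝔤 = ℋ ⊕ 𝒦 ⊕ 𝒮 ⊕ 𝒰` as an internal direct sum of subspaces. Then `ℋ + 𝔞₀ + 𝒯₁` is a Cartan
subalgebra of `𝔤`. -/
theorem sum_isCartanSubalgebra_of_anosov_splitting
    (L : Type*) [LieRing L] [LieAlgebra ℝ L] [FiniteDimensional ℝ L]
    (H K : LieSubalgebra ℝ L) (hHnil : LieRing.IsNilpotent ↥H)
    (hHK : ∀ h ∈ H, ∀ k ∈ K, ⁅h, k⁆ = 0)
    (T₁ : Submodule ℝ L) (hT₁K : T₁ ≤ K.toSubmodule)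
    (hT₁central : ∀ t ∈ T₁, ∀ k ∈ K, ⁅t, k⁆ = 0)
    (Kstar : LieSubalgebra ℝ L) (hKstarK : Kstar ≤ K)
    (hdisj : T₁ ⊓ Kstar.toSubmodule = ⊥)
    (hsum : T₁ ⊔ Kstar.toSubmodule = K.toSubmodule)
    (a₀ : LieSubalgebra ℝ ↥Kstar) (ha₀ : a₀.IsCartanSubalgebra)
    (h₀ : L) (hh₀ : h₀ ∈ H) (S U : Submodule ℝ L)
    (hSinv : ∀ s ∈ S, ⁅h₀, s⁆ ∈ S)
    (hSinj : Set.InjOn (fun w => ⁅h₀, w⁆) (S : Set L))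
    (hUinv : ∀ u ∈ U, ⁅h₀, u⁆ ∈ U)
    (hUinj : Set.InjOn (fun w => ⁅h₀, w⁆) (U : Set L))
    (hindep : iSupIndep ![H.toSubmodule, K.toSubmodule, S, U])
    (hsup : H.toSubmodule ⊔ K.toSubmodule ⊔ S ⊔ U = ⊤) :
    ∃ C : LieSubalgebra ℝ L,
      C.toSubmodule = H.toSubmodule ⊔ (a₀.map Kstar.incl).toSubmodule ⊔ T₁ ∧
      C.IsCartanSubalgebra := by
  classical
  set A : LieSubalgebra ℝ L := a₀.map Kstar.incl with hA
  have hA_Kstar : ∀ a ∈ A, a ∈ Kstar := by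
    intro a ha
    rw [hA, LieSubalgebra.mem_map] at ha
    obtain ⟨y, -, rfl⟩ := ha
    exact y.2
  have hA_K : ∀ a ∈ A, a ∈ K := fun a ha => hKstarK (hA_Kstar a ha)
  -- bracket vanishing facts
  have hHA : ∀ h ∈ H, ∀ a ∈ A, ⁅h, a⁆ = 0 := fun h hh a ha => hHK h hh a (hA_K a ha)
  have hHT : ∀ h ∈ H, ∀ t ∈ T₁, ⁅h, t⁆ = 0 := fun h hh t ht => hHK h hh t (hT₁K ht)
  have hTA : ∀ t ∈ T₁, ∀ a ∈ A, ⁅t, a⁆ = 0 := fun t ht a ha => hT₁central t ht a (hA_K a ha)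
  have hTT : ∀ t ∈ T₁, ∀ t' ∈ T₁, ⁅t, t'⁆ = 0 :=
    fun t ht t' ht' => hT₁central t ht t' (hT₁K ht')
  have hTH : ∀ t ∈ T₁, ∀ h ∈ H, ⁅t, h⁆ = 0 := fun t ht h hh => lie_skew_zero (hHT h hh t ht)
  have hAH : ∀ a ∈ A, ∀ h ∈ H, ⁅a, h⁆ = 0 := fun a ha h hh => lie_skew_zero (hHA h hh a ha)
  have hAT : ∀ a ∈ A, ∀ t ∈ T₁, ⁅a, t⁆ = 0 := fun a ha t ht => lie_skew_zero (hTA t ht a ha)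
  set Cs : Submodule ℝ L := H.toSubmodule ⊔ A.toSubmodule ⊔ T₁ with hCsdef
  have hH_le : H.toSubmodule ≤ Cs := le_sup_of_le_left le_sup_left
  have hA_le : A.toSubmodule ≤ Cs := le_sup_of_le_left le_sup_right
  have hT_le : T₁ ≤ Cs := le_sup_right
  have hmemCs : ∀ x ∈ Cs, ∃ h ∈ H, ∃ a ∈ A, ∃ t ∈ T₁, x = h + a + t := by
    intro x hx
    rw [hCsdef, Submodule.mem_sup] at hx
    obtain ⟨p, hp, t, ht, rfl⟩ := hx
    rw [Submodule.mem_sup] at hp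
    obtain ⟨h, hh, a, ha, rfl⟩ := hp
    exact ⟨h, hh, a, ha, t, ht, rfl⟩
  have hbrak : ∀ x ∈ Cs, ∀ y ∈ Cs, ⁅x, y⁆ ∈ Cs := by
    intro x hx y hy
    obtain ⟨h, hh, a, ha, t, ht, rfl⟩ := hmemCs x hx
    obtain ⟨h', hh', a', ha', t', ht', rfl⟩ := hmemCs y hy
    have e : ⁅h + a + t, h' + a' + t'⁆ = ⁅h, h'⁆ + ⁅a, a'⁆ := by
      simp only [add_lie, lie_add]
      rw [hHA h hh a' ha', hHT h hh t' ht', hAH a ha h' hh', hAT a ha t' ht',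
        hTH t ht h' hh', hTA t ht a' ha', hTT t ht t' ht']
      abel
    rw [e]
    exact Cs.add_mem (hH_le (H.lie_mem hh hh')) (hA_le (A.lie_mem ha ha'))
  set C : LieSubalgebra ℝ L := { Cs with lie_mem' := fun {x y} hx hy => hbrak x hx y hy }
    with hCdef
  have hmemC : ∀ {x : L}, x ∈ C ↔ x ∈ Cs := fun {x} => Iff.rfl
  -- nilpotency of A
  haveI hAnil : LieRing.IsNilpotent ↥A := by
    haveI := ha₀.nilpotent
    have hrange : (Kstar.incl.comp a₀.incl).range = A := by
      ext z
      rw [LieHom.mem_range, hA, LieSubalgebra.mem_map]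
      constructor
      · rintro ⟨y, rfl⟩
        exact ⟨(y : ↥Kstar), y.2, rfl⟩
      · rintro ⟨y, hy, rfl⟩
        exact ⟨⟨y, hy⟩, rfl⟩
    rw [← hrange]
    exact (Kstar.incl.comp a₀.incl).isNilpotent_range
  -- C is nilpotent
  have hCnil : LieRing.IsNilpotent ↥C := by
    rw [LieAlgebra.isNilpotent_iff_forall (R := ℝ) (L := ↥C)]
    intro x
    obtain ⟨h, hh, a, ha, t, ht, hxe⟩ := hmemCs (x : L) x.2
    obtain ⟨nH, hnH⟩ := exists_ad_pow_vanish H hHnil hh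
    obtain ⟨nA, hnA⟩ := exists_ad_pow_vanish A hAnil ha
    have hadH : ∀ c ∈ Cs, (ad ℝ L h) c ∈ H := by
      intro c hc
      obtain ⟨h', hh', a', ha', t', ht', rfl⟩ := hmemCs c hc
      simp only [ad_apply, lie_add]
      rw [hHA h hh a' ha', hHT h hh t' ht', add_zero, add_zero]
      exact H.lie_mem hh hh'
    have hadA : ∀ c ∈ Cs, (ad ℝ L a) c ∈ A := by
      intro c hc
      obtain ⟨h', hh', a', ha', t', ht', rfl⟩ := hmemCs c hc
      simp only [ad_apply, lie_add]
      rw [hAH a ha h' hh', hAT a ha t' ht', zero_add, add_zero]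
      exact A.lie_mem ha ha'
    have hadT : ∀ c ∈ Cs, (ad ℝ L t) c = 0 := by
      intro c hc
      obtain ⟨h', hh', a', ha', t', ht', rfl⟩ := hmemCs c hc
      simp only [ad_apply, lie_add]
      rw [hTH t ht h' hh', hTA t ht a' ha', hTT t ht t' ht', add_zero, add_zero]
    have hmapH : ∀ c ∈ Cs, (ad ℝ L h) c ∈ Cs := fun c hc => hH_le (hadH c hc)
    have hmapA : ∀ c ∈ Cs, (ad ℝ L a) c ∈ Cs := fun c hc => hA_le (hadA c hc)
    have hmapT : ∀ c ∈ Cs, (ad ℝ L t) c ∈ Cs := fun c hc => by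
      rw [hadT c hc]; exact Cs.zero_mem
    have hvanH : ∀ c ∈ Cs, ((ad ℝ L h) ^ (nH + 1)) c = 0 := by
      intro c hc
      rw [pow_succ, Module.End.mul_apply]
      exact hnH _ (hadH c hc)
    have hvanA : ∀ c ∈ Cs, ((ad ℝ L a) ^ (nA + 1)) c = 0 := by
      intro c hc
      rw [pow_succ, Module.End.mul_apply]
      exact hnA _ (hadA c hc)
    have hvanT : ∀ c ∈ Cs, ((ad ℝ L t) ^ 1) c = 0 := by
      intro c hc
      rw [pow_one]
      exact hadT c hc
    have nilFH := isNilpotent_restrict_of_pow_vanish _ _ hmapH _ hvanH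
    have nilFA := isNilpotent_restrict_of_pow_vanish _ _ hmapA _ hvanA
    have nilFT := isNilpotent_restrict_of_pow_vanish _ _ hmapT _ hvanT
    have cHA : Commute ((ad ℝ L h).restrict hmapH) ((ad ℝ L a).restrict hmapA) :=
      commute_restrict_of_commute _ _ _ _ _ (commute_ad_of_lie_eq_zero (hHA h hh a ha))
    have cHT : Commute ((ad ℝ L h).restrict hmapH) ((ad ℝ L t).restrict hmapT) :=
      commute_restrict_of_commute _ _ _ _ _ (commute_ad_of_lie_eq_zero (hHT h hh t ht))
    have cAT : Commute ((ad ℝ L a).restrict hmapA) ((ad ℝ L t).restrict hmapT) :=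
      commute_restrict_of_commute _ _ _ _ _ (commute_ad_of_lie_eq_zero (hAT a ha t ht))
    have hadC : ad ℝ ↥C x =
        (ad ℝ L h).restrict hmapH + (ad ℝ L a).restrict hmapA + (ad ℝ L t).restrict hmapT := by
      apply LinearMap.ext
      intro c
      apply Subtype.ext
      have lhs : ((ad ℝ ↥C x) c : L) = ⁅(x : L), (c : L)⁆ := rfl
      rw [lhs]
      have rhs : ((((ad ℝ L h).restrict hmapH + (ad ℝ L a).restrict hmapA +
          (ad ℝ L t).restrict hmapT) c : ↥C) : L) = ⁅h, (c : L)⁆ + ⁅a, (c : L)⁆ + ⁅t, (c : L)⁆ :=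
        rfl
      rw [hxe, add_lie, add_lie]
      exact rhs.symm
    rw [hadC]
    exact Commute.isNilpotent_add (cHT.add_left cAT) (cHA.isNilpotent_add nilFH nilFA) nilFT
  -- disjointness consequences of independence
  have hd0 : Disjoint H.toSubmodule K.toSubmodule := by
    refine (hindep 0).mono_right ?_
    exact le_iSup_of_le 1 (le_iSup_of_le (by decide) le_rfl)
  have hd2 : Disjoint S (H.toSubmodule ⊔ K.toSubmodule ⊔ U) := by
    refine (hindep 2).mono_right ?_
    refine sup_le (sup_le ?_ ?_) ?_
    · exact le_iSup_of_le 0 (le_iSup_of_le (by decide) le_rfl)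
    · exact le_iSup_of_le 1 (le_iSup_of_le (by decide) le_rfl)
    · exact le_iSup_of_le 3 (le_iSup_of_le (by decide) le_rfl)
  have hd3 : Disjoint U (H.toSubmodule ⊔ K.toSubmodule ⊔ S) := by
    refine (hindep 3).mono_right ?_
    refine sup_le (sup_le ?_ ?_) ?_
    · exact le_iSup_of_le 0 (le_iSup_of_le (by decide) le_rfl)
    · exact le_iSup_of_le 1 (le_iSup_of_le (by decide) le_rfl)
    · exact le_iSup_of_le 2 (le_iSup_of_le (by decide) le_rfl)
  have hCle : Cs ≤ H.toSubmodule ⊔ K.toSubmodule := by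
    refine sup_le (sup_le le_sup_left ?_) ?_
    · intro a ha
      exact Submodule.mem_sup_right (hA_K a ha)
    · exact le_sup_of_le_right hT₁K
  -- C ∩ Kstar ≤ A
  have hCK_A : ∀ c ∈ Cs, c ∈ Kstar → c ∈ A := by
    intro c hc hcK
    obtain ⟨h', hh', a', ha', t', ht', rfl⟩ := hmemCs c hc
    have hh'K : h' ∈ K.toSubmodule := by
      have e : h' = (h' + a' + t') - a' - t' := by abel
      rw [e]
      exact Submodule.sub_mem _ (Submodule.sub_mem _ (hKstarK hcK) (hA_K _ ha')) (hT₁K ht')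
    have hh'0 : h' = 0 := (Submodule.disjoint_def.mp hd0) h' hh' hh'K
    have ht'Ks : t' ∈ Kstar.toSubmodule := by
      have e : t' = (h' + a' + t') - h' - a' := by abel
      rw [e]
      refine Submodule.sub_mem _ (Submodule.sub_mem _ hcK ?_) (hA_Kstar _ ha')
      rw [hh'0]
      exact Submodule.zero_mem _
    have ht'0 : t' = 0 := by
      have : t' ∈ T₁ ⊓ Kstar.toSubmodule := ⟨ht', ht'Ks⟩
      rw [hdisj] at this
      simpa using this
    rw [hh'0, ht'0, zero_add, add_zero]
    exact ha'
  -- self-normalizing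
  have hnorm : C.normalizer = C := by
    refine le_antisymm ?_ C.le_normalizer
    intro x hx
    rw [LieSubalgebra.mem_normalizer_iff] at hx
    have hxtop : x ∈ H.toSubmodule ⊔ K.toSubmodule ⊔ S ⊔ U := by
      rw [hsup]; exact Submodule.mem_top
    rw [Submodule.mem_sup] at hxtop
    obtain ⟨p, hp, u, hu, rfl⟩ := hxtop
    rw [Submodule.mem_sup] at hp
    obtain ⟨q, hq, s, hs, rfl⟩ := hp
    rw [Submodule.mem_sup] at hq
    obtain ⟨h, hh, k, hk, rfl⟩ := hq
    -- bracket with h₀ kills s and u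
    have hb : ⁅h + k + s + u, h₀⁆ ∈ Cs := hx h₀ (hH_le hh₀)
    have hkh₀ : ⁅k, h₀⁆ = 0 := lie_skew_zero (hHK h₀ hh₀ k hk)
    have hse : ⁅s, h₀⁆ = ⁅h + k + s + u, h₀⁆ - ⁅h, h₀⁆ - ⁅u, h₀⁆ := by
      rw [add_lie, add_lie, add_lie, hkh₀]
      abel
    have hsS : ⁅s, h₀⁆ ∈ S := by
      rw [← lie_skew]
      exact S.neg_mem (hSinv s hs)
    have hsHKU : ⁅s, h₀⁆ ∈ H.toSubmodule ⊔ K.toSubmodule ⊔ U := by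
      rw [hse]
      refine Submodule.sub_mem _ (Submodule.sub_mem _ ?_ ?_) ?_
      · exact Submodule.mem_sup_left (hCle hb)
      · exact Submodule.mem_sup_left (Submodule.mem_sup_left (H.lie_mem hh hh₀))
      · exact Submodule.mem_sup_right (by rw [← lie_skew]; exact U.neg_mem (hUinv u hu))
    have hs0 : s = 0 := by
      have hz : ⁅s, h₀⁆ = 0 := (Submodule.disjoint_def.mp hd2) _ hsS hsHKU
      have hz' : ⁅h₀, s⁆ = 0 := lie_skew_zero hz
      exact hSinj hs S.zero_mem (by simpa using hz')
    subst hs0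
    have hue : ⁅u, h₀⁆ = ⁅h + k + 0 + u, h₀⁆ - ⁅h, h₀⁆ := by
      rw [add_lie, add_lie, add_lie, hkh₀, zero_lie]
      abel
    have huU : ⁅u, h₀⁆ ∈ U := by
      rw [← lie_skew]
      exact U.neg_mem (hUinv u hu)
    have huHKS : ⁅u, h₀⁆ ∈ H.toSubmodule ⊔ K.toSubmodule ⊔ S := by
      rw [hue]
      refine Submodule.sub_mem _ ?_ ?_
      · exact Submodule.mem_sup_left (hCle hb)
      · exact Submodule.mem_sup_left (Submodule.mem_sup_left (H.lie_mem hh hh₀))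
    have hu0 : u = 0 := by
      have hz : ⁅u, h₀⁆ = 0 := (Submodule.disjoint_def.mp hd3) _ huU huHKS
      have hz' : ⁅h₀, u⁆ = 0 := lie_skew_zero hz
      exact hUinj hu U.zero_mem (by simpa using hz')
    subst hu0
    -- now x = h + k, split k
    rw [← hsum, Submodule.mem_sup] at hk
    obtain ⟨t, ht, kst, hkst, rfl⟩ := hk
    have hkstK : kst ∈ Kstar := hkst
    -- kst normalizes a₀
    have hkstA : kst ∈ A := by
      have hnorm' : (⟨kst, hkstK⟩ : ↥Kstar) ∈ a₀.normalizer := by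
        rw [LieSubalgebra.mem_normalizer_iff]
        intro y hy
        have hyA : (y : L) ∈ A := by
          rw [hA, LieSubalgebra.mem_map]
          exact ⟨y, hy, rfl⟩
        have hyK : (y : L) ∈ K := hA_K _ hyA
        have hbr : ⁅h + (t + kst) + 0 + 0, (y : L)⁆ ∈ Cs := hx _ (hA_le hyA)
        have e : ⁅h + (t + kst) + 0 + 0, (y : L)⁆ = ⁅kst, (y : L)⁆ := by
          rw [add_zero, add_zero, add_lie, add_lie, hHK h hh _ hyK, hT₁central t ht _ hyK]
          abel
        rw [e] at hbr
        have hmemKs : ⁅kst, (y : L)⁆ ∈ Kstar := Kstar.lie_mem hkstK y.2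
        have hbrA : ⁅kst, (y : L)⁆ ∈ A := hCK_A _ hbr hmemKs
        rw [hA, LieSubalgebra.mem_map] at hbrA
        obtain ⟨b, hb', hbe⟩ := hbrA
        have heq : ⁅(⟨kst, hkstK⟩ : ↥Kstar), y⁆ = b := Subtype.ext hbe.symm
        rw [heq]
        exact hb'
      rw [ha₀.self_normalizing] at hnorm'
      rw [hA, LieSubalgebra.mem_map]
      exact ⟨⟨kst, hkstK⟩, hnorm', rfl⟩
    show h + (t + kst) + 0 + 0 ∈ Cs
    rw [add_zero, add_zero]
    exact Cs.add_mem (hH_le hh) (Cs.add_mem (hT_le ht) (hA_le hkstA))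
  exact ⟨C, rfl, ⟨hCnil, hnorm⟩⟩
end

section
/- Let 𝔤 be a finite-dimensional real Lie algebra, let ℋ be a nilpotent Lie subalgebra of 𝔤, and let h₀ ∈ ℋ. Suppose there exist linear subspaces 𝒮, 𝒰 of 𝔤, each mapped into itself by ad(h₀) with ad(h₀) injective on each of them, such that 𝔤 is the internal direct sum of subspaces 𝔤 = ℋ ⊕ 𝒮 ⊕ 𝒰. Then ℋ is a Cartan subalgebra of 𝔤. -/
/-- Let `𝔤` be a finite-dimensional real Lie algebra, `ℋ` a nilpotent Lie
subalgebra, and `h₀ ∈ ℋ`. Suppose there exist linear subspaces `𝒮, 𝒰`, each mapped into itself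
by `ad h₀` with `ad h₀` injective on each of them, such that `𝔤 = ℋ ⊕ 𝒮 ⊕ 𝒰` as an internal
direct sum of subspaces. Then `ℋ` is a Cartan subalgebra of `𝔤`. -/
theorem isCartanSubalgebra_of_anosov_splitting
    (L : Type*) [LieRing L] [LieAlgebra ℝ L] [FiniteDimensional ℝ L]
    (H : LieSubalgebra ℝ L) (hHnil : LieRing.IsNilpotent ↥H)
    (h₀ : L) (hh₀ : h₀ ∈ H) (S U : Submodule ℝ L)
    (hSinv : ∀ s ∈ S, ⁅h₀, s⁆ ∈ S)
    (hSinj : Set.InjOn (fun w => ⁅h₀, w⁆) (S : Set L))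
    (hUinv : ∀ u ∈ U, ⁅h₀, u⁆ ∈ U)
    (hUinj : Set.InjOn (fun w => ⁅h₀, w⁆) (U : Set L))
    (hindep : iSupIndep ![H.toSubmodule, S, U])
    (hsup : H.toSubmodule ⊔ S ⊔ U = ⊤) :
    H.IsCartanSubalgebra := by
  refine ⟨hHnil, le_antisymm ?_ H.le_normalizer⟩
  intro x hx
  have hxtop : x ∈ H.toSubmodule ⊔ S ⊔ U := hsup ▸ Submodule.mem_top
  obtain ⟨y, hy, u, hu, rfl⟩ := Submodule.mem_sup.mp hxtop
  obtain ⟨h, hh, s, hs, rfl⟩ := Submodule.mem_sup.mp hy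
  have hdisjH : Disjoint H.toSubmodule (S ⊔ U) := by
    have := hindep.disjoint_biSup (x := 0) (y := {1, 2}) (by simp)
    simpa [iSup_or, iSup_sup_eq, iSup_iSup_eq_left] using this
  have hdisjS : Disjoint S (H.toSubmodule ⊔ U) := by
    have := hindep.disjoint_biSup (x := 1) (y := {0, 2}) (by simp)
    simpa [iSup_or, iSup_sup_eq, iSup_iSup_eq_left] using this
  have hdisjU : Disjoint U (H.toSubmodule ⊔ S) := by
    have := hindep.disjoint_biSup (x := 2) (y := {0, 1}) (by simp)
    simpa [iSup_or, iSup_sup_eq, iSup_iSup_eq_left] using this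
  have hbx : ⁅h₀, h + s + u⁆ ∈ H := (H.mem_normalizer_iff' _).mp hx h₀ hh₀
  have hbh : ⁅h₀, h⁆ ∈ H := H.lie_mem hh₀ hh
  have hy0 : ⁅h₀, s⁆ + ⁅h₀, u⁆ ∈ H.toSubmodule := by
    have : ⁅h₀, h + s + u⁆ - ⁅h₀, h⁆ ∈ H := H.sub_mem hbx hbh
    simpa [lie_add, add_assoc, add_sub_cancel_left] using this
  have hySU : ⁅h₀, s⁆ + ⁅h₀, u⁆ ∈ S ⊔ U :=
    Submodule.add_mem_sup (hSinv s hs) (hUinv u hu)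
  have hzero : ⁅h₀, s⁆ + ⁅h₀, u⁆ = 0 :=
    (Submodule.disjoint_def.mp hdisjH) _ hy0 hySU
  have hsU : ⁅h₀, s⁆ ∈ U := by
    have : ⁅h₀, s⁆ = -⁅h₀, u⁆ := eq_neg_of_add_eq_zero_left hzero
    rw [this]; exact U.neg_mem (hUinv u hu)
  have hs0 : ⁅h₀, s⁆ = 0 :=
    (Submodule.disjoint_def.mp hdisjS) _ (hSinv s hs)
      (Submodule.mem_sup_right hsU)
  have hseq : s = 0 := hSinj hs S.zero_mem (by simpa using hs0)
  have hu0 : ⁅h₀, u⁆ = 0 := by rw [hs0, zero_add] at hzero; exact hzero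
  have hueq : u = 0 := hUinj hu U.zero_mem (by simpa using hu0)
  rw [hseq, hueq, add_zero, add_zero]
  exact hh
end

section
/- Let V be a finite-dimensional vector space over a field K and let f be an endomorphism of V whose generalized eigenspaces span V, i.e. the supremum over all μ ∈ K of the generalized μ-eigenspaces of f is all of V. Let W be a linear subspace of V with f(W) ⊆ W, let p : V → V/W be the quotient map, and let f̄ be the endomorphism of V/W induced by f. Then for every μ ∈ K, the generalized μ-eigenspace of f̄ equals the image under p of the generalized μ-eigenspace of f. -/
/-- Let `V` be a finite-dimensional `K`-vector space and `f` an endomorphism of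
`V` whose generalized eigenspaces span `V`. Let `W` be an `f`-invariant subspace, `p : V → V/W`
the quotient map and `f̄` the induced endomorphism of `V/W`. Then for every `μ ∈ K`, the
generalized `μ`-eigenspace of `f̄` equals the image under `p` of the generalized `μ`-eigenspace
of `f`. -/
theorem quotient_spectral_decomposition
    (K : Type*) [Field K] (V : Type*) [AddCommGroup V] [Module K V] [FiniteDimensional K V]
    (f : Module.End K V) (hf : (⨆ μ : K, f.maxGenEigenspace μ) = ⊤)
    (W : Submodule K V) (hW : W ≤ W.comap f) :
    ∀ μ : K,
      Module.End.maxGenEigenspace (W.mapQ W f hW) μ =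
        (f.maxGenEigenspace μ).map W.mkQ := by
  set g : Module.End K (V ⧸ W) := W.mapQ W f hW with hg
  -- commutation of (g - μ)^k with mkQ
  have hcomm : ∀ (μ : K) (k : ℕ) (x : V),
      ((g - μ • 1) ^ k) (W.mkQ x) = W.mkQ (((f - μ • 1) ^ k) x) := by
    intro μ k
    induction k with
    | zero => intro x; simp
    | succ k ih =>
      intro x
      rw [pow_succ, pow_succ, Module.End.mul_apply, Module.End.mul_apply]
      have h1 : (g - μ • 1) (W.mkQ x) = W.mkQ ((f - μ • 1) x) := by
        simp only [LinearMap.sub_apply, LinearMap.smul_apply, Module.End.one_apply, hg,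
          Submodule.mapQ_apply, map_sub, map_smul]
        simp [Submodule.mkQ_apply, Submodule.mapQ_apply]
      rw [h1, ih]
  -- the easy inclusion
  have hle : ∀ μ : K, (f.maxGenEigenspace μ).map W.mkQ ≤ g.maxGenEigenspace μ := by
    intro μ y hy
    rw [Submodule.mem_map] at hy
    obtain ⟨x, hx, rfl⟩ := hy
    rw [Module.End.mem_maxGenEigenspace] at hx ⊢
    obtain ⟨k, hk⟩ := hx
    exact ⟨k, by rw [hcomm, hk, map_zero]⟩
  -- the images span the quotient
  have hsup : (⨆ μ : K, (f.maxGenEigenspace μ).map W.mkQ) = ⊤ := by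
    rw [← Submodule.map_iSup, hf, Submodule.map_top, Submodule.range_mkQ]
  -- independence of the generalized eigenspaces of g
  have hind := g.independent_maxGenEigenspace
  intro μ
  refine le_antisymm ?_ (hle μ)
  have h1 : (⊤ : Submodule K (V ⧸ W)) ≤
      (f.maxGenEigenspace μ).map W.mkQ ⊔ ⨆ ν ∈ ({μ}ᶜ : Set K), g.maxGenEigenspace ν := by
    rw [← hsup]
    refine iSup_le fun ν => ?_
    by_cases hν : ν = μ
    · subst hν; exact le_sup_left
    · exact le_trans (hle ν) (le_sup_of_le_right (le_biSup _ hν))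
  have h2 : Disjoint (g.maxGenEigenspace μ) (⨆ ν ∈ ({μ}ᶜ : Set K), g.maxGenEigenspace ν) :=
    hind.disjoint_biSup (by simp)
  calc g.maxGenEigenspace μ
      = ((f.maxGenEigenspace μ).map W.mkQ ⊔ ⨆ ν ∈ ({μ}ᶜ : Set K), g.maxGenEigenspace ν)
        ⊓ g.maxGenEigenspace μ := by
        rw [inf_eq_right.mpr (le_trans le_top h1)]
    _ = (f.maxGenEigenspace μ).map W.mkQ ⊔
        ((⨆ ν ∈ ({μ}ᶜ : Set K), g.maxGenEigenspace ν) ⊓ g.maxGenEigenspace μ) :=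
        sup_inf_assoc_of_le _ (hle μ)
    _ ≤ (f.maxGenEigenspace μ).map W.mkQ := by
        rw [inf_comm, h2.eq_bot, sup_bot_eq]
end

section
/- Let 𝔤 be a Lie algebra over a field, let 𝒩 be a Lie ideal of 𝔤, and let ℋ be a Lie subalgebra of 𝔤 such that every element of 𝔤 is a sum of an element of 𝒩 and an element of ℋ (i.e. 𝔤 = 𝒩 + ℋ as subspaces). Then the subspace ⁅𝒩, 𝒩⁆ + (ℋ ∩ 𝒩) is a Lie ideal of 𝔤. -/
/-- Let `𝔤` be a Lie algebra over a field, `𝒩` a Lie ideal of `𝔤`, and `ℋ` a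
Lie subalgebra with `𝔤 = 𝒩 + ℋ` as subspaces. Then the subspace `⁅𝒩, 𝒩⁆ + (ℋ ∩ 𝒩)` is a Lie
ideal of `𝔤`, i.e. it is stable under bracketing with arbitrary elements of `𝔤`. -/
theorem commutator_sup_inter_isIdeal
    (K : Type*) [Field K] (L : Type*) [LieRing L] [LieAlgebra K L]
    (N : LieIdeal K L) (H : LieSubalgebra K L)
    (hsum : ∀ x : L, ∃ n ∈ N, ∃ h ∈ H, x = n + h) :
    ∀ x : L, ∀ y ∈ (LieSubmodule.toSubmodule ⁅N, N⁆ ⊔ (H.toSubmodule ⊓ N.toSubmodule) :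
        Submodule K L),
      ⁅x, y⁆ ∈ (LieSubmodule.toSubmodule ⁅N, N⁆ ⊔ (H.toSubmodule ⊓ N.toSubmodule) :
        Submodule K L) := by
  intro x y hy
  rw [Submodule.mem_sup] at hy ⊢
  obtain ⟨a, ha, b, ⟨hbH, hbN⟩, rfl⟩ := hy
  obtain ⟨n, hn, h, hh, rfl⟩ := hsum x
  refine ⟨⁅n + h, a⁆ + ⁅n, b⁆, ?_, ⁅h, b⁆, ⟨H.lie_mem hh hbH, N.lie_mem hbN⟩, ?_⟩
  · exact add_mem ((⁅N, N⁆ : LieIdeal K L).lie_mem ha)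
      (LieSubmodule.lie_mem_lie hn hbN)
  · simp [lie_add, add_lie]; abel
end

section
/- Let Ĝ be a group, H₀ a subgroup of Ĝ contained in the center of Ĝ, and Γ̂, K̂ subgroups of Ĝ. Assume the following freeness condition: for all γ̂ ∈ Γ̂ and ĝ ∈ Ĝ, if γ̂ ∈ ĝ K̂ H₀ ĝ⁻¹ then γ̂ ∈ H₀. Then for every h ∈ H₀ and ĝ ∈ Ĝ, if there exist γ̂ ∈ Γ̂ and k̂ ∈ K̂ with ĝ h = γ̂ ĝ k̂, then h = a·b for some a ∈ Γ̂ ∩ H₀ and some b ∈ K̂ ∩ H₀. -/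
/-- Let `Ĝ` be a group, `H₀` a central subgroup, and `Γ̂, K̂` subgroups.
Assume that for all `γ̂ ∈ Γ̂` and `ĝ ∈ Ĝ`, if `γ̂ ∈ ĝ K̂ H₀ ĝ⁻¹` then `γ̂ ∈ H₀`. Then for every
`h ∈ H₀` and `ĝ ∈ Ĝ`, if there are `γ̂ ∈ Γ̂` and `k̂ ∈ K̂` with `ĝ h = γ̂ ĝ k̂`, then `h = a * b`
with `a ∈ Γ̂ ∩ H₀` and `b ∈ K̂ ∩ H₀`. -/
theorem central_fixing_element_in_lattice
    (G : Type*) [Group G] (H₀ Γ K : Subgroup G)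
    (hcentral : H₀ ≤ Subgroup.center G)
    (hfree : ∀ γ ∈ Γ, ∀ g : G, (∃ k ∈ K, ∃ h ∈ H₀, γ = g * k * h * g⁻¹) → γ ∈ H₀)
    (h : G) (hh : h ∈ H₀) (g : G)
    (hex : ∃ γ ∈ Γ, ∃ k ∈ K, g * h = γ * g * k) :
    ∃ a ∈ Γ ⊓ H₀, ∃ b ∈ K ⊓ H₀, h = a * b := by
  obtain ⟨γ, hγ, k, hk, heq⟩ := hex
  have hc : k⁻¹ * h = h * k⁻¹ := (Subgroup.mem_center_iff.mp (hcentral hh)) k⁻¹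
  have hγeq : γ = g * k⁻¹ * h * g⁻¹ := by
    have h1 : γ = g * h * (g * k)⁻¹ := by
      rw [eq_mul_inv_iff_mul_eq, ← mul_assoc, heq]
    rw [h1, mul_inv_rev, ← mul_assoc, mul_assoc g h k⁻¹, ← hc, ← mul_assoc]
  have hγH : γ ∈ H₀ := hfree γ hγ g ⟨k⁻¹, inv_mem hk, h, hh, hγeq⟩
  have hcc : g * γ = γ * g := (Subgroup.mem_center_iff.mp (hcentral hγH)) g
  have hkeq : k = γ⁻¹ * h := by
    have h2 : g * h = g * (γ * k) := by rw [heq, ← mul_assoc, ← hcc, mul_assoc]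
    have h3 := mul_left_cancel h2
    rw [h3]; group
  refine ⟨γ, Subgroup.mem_inf.mpr ⟨hγ, hγH⟩, k,
    Subgroup.mem_inf.mpr ⟨hk, by rw [hkeq]; exact mul_mem (inv_mem hγH) hh⟩, ?_⟩
  rw [hkeq]; group
end
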